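/- Let N be a finite set of cardinality n ≥ 2, n₀ ∈ N fixed, and l_i, u_i ∈ ℝ with 0 ≤ l_i < u_i for all i. With D and F_T as in the dual construction (D(T) = ∏_{i∈T} l_i/(u_i−l_i) for T ⊆ N\{n₀}, |T| ≤ n−2, else 0; F_T(R) = (−1)^{n−|R|+|T|} ∏_{i∈T\R} u_i ∏_{j∈(N\T)\R} l_j), the dual constraint for R = {n₀} holds: ∏_{i∈N\{n₀}} l_i + ∑_{T ⊆ N\{n₀}, |T| ≤ n−2} F_T({n₀}) · (∑_{T̂ ⊇ T} D(T̂)) = 0. -/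

import Mathlib

theorem stmt_16 {α : Type*} [DecidableEq α] (N : Finset α) (n₀ : α)
    (hn₀ : n₀ ∈ N) (hN : 2 ≤ N.card) (l u : α → ℝ)
    (hl : ∀ i ∈ N, 0 ≤ l i) (hlu : ∀ i ∈ N, l i < u i)
    (D : Finset α → ℝ)
    (hD : ∀ T : Finset α,
      D T = if n₀ ∉ T ∧ T.card ≤ N.card - 2 then ∏ i ∈ T, l i / (u i - l i) else 0) :
    (∏ i ∈ N \ {n₀}, l i)
      + ∑ T ∈ N.powerset.filter (fun T => n₀ ∉ T ∧ T.card ≤ N.card - 2),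
          ((-1 : ℝ) ^ (N.card - ({n₀} : Finset α).card + T.card)
              * (∏ i ∈ T \ {n₀}, u i) * (∏ j ∈ (N \ T) \ {n₀}, l j))
            * (∑ T' ∈ N.powerset.filter (fun T' => T ⊆ T'), D T') = 0 := by
  classical
  set M : Finset α := N \ {n₀} with hM
  have hMcard : M.card = N.card - 1 := by
    rw [hM, Finset.card_sdiff_of_subset (by simpa using hn₀), Finset.card_singleton]
  have hMsub : M ⊆ N := Finset.sdiff_subset
  set S : Finset (Finset α) := M.powerset.filter (fun T => T ≠ M) with hS
  -- membership characterization of S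
  have hSmem : ∀ T : Finset α, T ∈ S ↔ T ⊆ M ∧ T ≠ M := by
    intro T; simp [hS]
  have hScard : ∀ T ∈ S, T.card < M.card := by
    intro T hT
    obtain ⟨h1, h2⟩ := (hSmem T).mp hT
    exact Finset.card_lt_card (h1.ssubset_of_ne h2)
  -- the outer index set equals S
  have hset : N.powerset.filter (fun T => n₀ ∉ T ∧ T.card ≤ N.card - 2) = S := by
    ext T
    simp only [Finset.mem_filter, Finset.mem_powerset, hSmem]
    constructor
    · rintro ⟨hTN, hn, hc⟩
      have hTM : T ⊆ M := fun x hx => Finset.mem_sdiff.mpr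
        ⟨hTN hx, by simp only [Finset.mem_singleton]; rintro rfl; exact hn hx⟩
      refine ⟨hTM, ?_⟩
      rintro rfl
      omega
    · rintro ⟨hTM, hne⟩
      have hTN : T ⊆ N := hTM.trans hMsub
      have hn : n₀ ∉ T := fun h => (Finset.mem_sdiff.mp (hTM h)).2 (Finset.mem_singleton_self _)
      have hlt : T.card < M.card := Finset.card_lt_card (hTM.ssubset_of_ne hne)
      exact ⟨hTN, hn, by omega⟩
  -- inner sums: only T' ∈ S contribute
  have hinner : ∀ T : Finset α,
      (∑ T' ∈ N.powerset.filter (fun T' => T ⊆ T'), D T')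
        = ∑ T' ∈ S.filter (fun T' => T ⊆ T'), ∏ i ∈ T', l i / (u i - l i) := by
    intro T
    have hsub : S.filter (fun T' => T ⊆ T') ⊆ N.powerset.filter (fun T' => T ⊆ T') := by
      intro x hx
      simp only [Finset.mem_filter, Finset.mem_powerset] at hx ⊢
      exact ⟨((hSmem x).mp hx.1).1.trans hMsub, hx.2⟩
    rw [← Finset.sum_subset hsub]
    · apply Finset.sum_congr rfl
      intro x hx
      simp only [Finset.mem_filter] at hx
      obtain ⟨hxS, -⟩ := hx
      obtain ⟨h1, h2⟩ := (hSmem x).mp hxS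
      have hn : n₀ ∉ x := fun h => (Finset.mem_sdiff.mp (h1 h)).2 (Finset.mem_singleton_self _)
      have hc : x.card ≤ N.card - 2 := by
        have := Finset.card_lt_card (h1.ssubset_of_ne h2); omega
      rw [hD]
      simp [hn, hc]
    · intro x hx hxn
      simp only [Finset.mem_filter, Finset.mem_powerset] at hx hxn
      rw [hD]
      rw [if_neg]
      rintro ⟨hn, hc⟩
      have hxM : x ⊆ M := fun y hy => Finset.mem_sdiff.mpr
        ⟨hx.1 hy, by simp only [Finset.mem_singleton]; rintro rfl; exact hn hy⟩
      exact hxn ⟨(hSmem x).mpr ⟨hxM, fun h => by subst h; omega⟩, hx.2⟩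
  rw [hset]
  -- rewriting the coefficient for T ∈ S
  have hcoef : ∀ T ∈ S,
      ((-1 : ℝ) ^ (N.card - ({n₀} : Finset α).card + T.card)
          * (∏ i ∈ T \ {n₀}, u i) * (∏ j ∈ (N \ T) \ {n₀}, l j))
        = (-1 : ℝ) ^ (N.card - 1 + T.card) * (∏ i ∈ T, u i) * (∏ j ∈ M \ T, l j) := by
    intro T hT
    obtain ⟨h1, -⟩ := (hSmem T).mp hT
    have hn : n₀ ∉ T := fun h => (Finset.mem_sdiff.mp (h1 h)).2 (Finset.mem_singleton_self _)
    have e1 : T \ {n₀} = T := (Finset.sdiff_singleton_eq_erase _ _).trans (Finset.erase_eq_of_notMem hn)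
    have e2 : (N \ T) \ {n₀} = M \ T := by
      ext x
      simp only [hM, Finset.mem_sdiff]
      tauto
    rw [e1, e2, Finset.card_singleton]
  rw [Finset.sum_congr rfl (fun T hT => by rw [hcoef T hT, hinner T])]
  -- turn into a double sum and swap
  have hswap :
      ∑ T ∈ S, ((-1 : ℝ) ^ (N.card - 1 + T.card) * (∏ i ∈ T, u i) * (∏ j ∈ M \ T, l j))
          * (∑ T' ∈ S.filter (fun T' => T ⊆ T'), ∏ i ∈ T', l i / (u i - l i))
        = ∑ T' ∈ S, ∑ T ∈ T'.powerset,
            ((-1 : ℝ) ^ (N.card - 1 + T.card) * (∏ i ∈ T, u i) * (∏ j ∈ M \ T, l j))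
              * (∏ i ∈ T', l i / (u i - l i)) := by
    simp_rw [Finset.mul_sum]
    apply Finset.sum_comm'
    intro T T'
    simp only [Finset.mem_filter, Finset.mem_powerset]
    constructor
    · rintro ⟨hT, hT', hsub⟩; exact ⟨hsub, hT'⟩
    · rintro ⟨hsub, hT'⟩
      obtain ⟨h1, h2⟩ := (hSmem T').mp hT'
      refine ⟨(hSmem T).mpr ⟨hsub.trans h1, ?_⟩, hT', hsub⟩
      rintro rfl
      exact h2 (Finset.Subset.antisymm h1 hsub)
  rw [hswap]
  -- compute each inner sum
  have hterm : ∀ T' ∈ S,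
      (∑ T ∈ T'.powerset,
          ((-1 : ℝ) ^ (N.card - 1 + T.card) * (∏ i ∈ T, u i) * (∏ j ∈ M \ T, l j))
            * (∏ i ∈ T', l i / (u i - l i)))
        = (-1 : ℝ) ^ (N.card - 1 + T'.card) * ∏ i ∈ M, l i := by
    intro T' hT'
    obtain ⟨h1, -⟩ := (hSmem T').mp hT'
    -- split ∏_{M\T} l for T ⊆ T'
    have hsplit : ∀ T ∈ T'.powerset, (∏ j ∈ M \ T, l j)
        = (∏ j ∈ T' \ T, l j) * ∏ j ∈ M \ T', l j := by
      intro T hT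
      rw [Finset.mem_powerset] at hT
      have : M \ T = (T' \ T) ∪ (M \ T') := by
        ext x
        simp only [Finset.mem_sdiff, Finset.mem_union]
        constructor
        · rintro ⟨hxM, hxT⟩
          by_cases h : x ∈ T'
          · exact Or.inl ⟨h, hxT⟩
          · exact Or.inr ⟨hxM, h⟩
        · rintro (⟨hx1, hx2⟩ | ⟨hx1, hx2⟩)
          · exact ⟨h1 hx1, hx2⟩
          · exact ⟨hx1, fun h => hx2 (hT h)⟩
      rw [this, Finset.prod_union]
      exact Finset.disjoint_left.mpr (fun x hx1 hx2 => by
        simp only [Finset.mem_sdiff] at hx1 hx2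
        exact hx2.2 hx1.1)
    rw [Finset.sum_congr rfl (fun T hT => by rw [hsplit T hT])]
    have key : (∑ T ∈ T'.powerset,
        ((-1 : ℝ) ^ (N.card - 1 + T.card) * (∏ i ∈ T, u i)
          * ((∏ j ∈ T' \ T, l j) * ∏ j ∈ M \ T', l j))
          * ∏ i ∈ T', l i / (u i - l i))
        = (-1 : ℝ) ^ (N.card - 1) * (∏ j ∈ M \ T', l j)
          * (∏ i ∈ T', l i / (u i - l i))
          * ∑ T ∈ T'.powerset, (∏ i ∈ T, -u i) * ∏ j ∈ T' \ T, l j := by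
      rw [Finset.mul_sum]
      apply Finset.sum_congr rfl
      intro T hT
      have : ∏ i ∈ T, -u i = (-1 : ℝ) ^ T.card * ∏ i ∈ T, u i := by
        rw [← Finset.prod_const, ← Finset.prod_mul_distrib]
        simp [neg_one_mul]
      rw [this, pow_add]
      ring
    rw [key, ← Finset.prod_add]
    have hfac : (∏ i ∈ T', l i / (u i - l i)) * (∏ i ∈ T', (-u i + l i))
        = (-1 : ℝ) ^ T'.card * ∏ i ∈ T', l i := by
      rw [← Finset.prod_mul_distrib]
      rw [show ((-1 : ℝ) ^ T'.card * ∏ i ∈ T', l i) = ∏ i ∈ T', (-1) * l i by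
        rw [Finset.prod_mul_distrib, Finset.prod_const]]
      apply Finset.prod_congr rfl
      intro i hi
      have hiN : i ∈ N := hMsub (h1 hi)
      have hne : u i - l i ≠ 0 := sub_ne_zero.mpr (hlu i hiN).ne'
      field_simp
      ring
    calc (-1 : ℝ) ^ (N.card - 1) * (∏ j ∈ M \ T', l j) * (∏ i ∈ T', l i / (u i - l i))
          * ∏ i ∈ T', (-u i + l i)
        = (-1 : ℝ) ^ (N.card - 1) * (∏ j ∈ M \ T', l j)
            * ((∏ i ∈ T', l i / (u i - l i)) * ∏ i ∈ T', (-u i + l i)) := by ring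
      _ = (-1 : ℝ) ^ (N.card - 1) * (-1 : ℝ) ^ T'.card
            * ((∏ j ∈ M \ T', l j) * ∏ i ∈ T', l i) := by rw [hfac]; ring
      _ = (-1 : ℝ) ^ (N.card - 1 + T'.card) * ∏ i ∈ M, l i := by
            rw [Finset.prod_sdiff h1, pow_add]
  rw [Finset.sum_congr rfl hterm]
  -- final sign computation
  have hMne : M ≠ ∅ := by
    intro h
    have := hMcard
    rw [h] at this
    simp at this
    omega
  have hsum : (∑ T' ∈ S, ((-1 : ℝ) ^ (N.card - 1 + T'.card))) = -1 := by
    have hSe : S = M.powerset.erase M := by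
      ext x; simp [hS, Finset.mem_erase, and_comm]
    have hzero : ∑ m ∈ M.powerset, ((-1 : ℝ)) ^ m.card = 0 := by
      have h := Finset.sum_powerset_neg_one_pow_card (x := M)
      rw [if_neg hMne] at h
      exact_mod_cast congrArg (fun z : ℤ => (z : ℝ)) h
    rw [hSe, Finset.sum_erase_eq_sub (Finset.mem_powerset_self M)]
    simp_rw [pow_add]
    rw [← Finset.mul_sum, hzero, mul_zero, zero_sub, ← pow_add]
    have heven : (-1 : ℝ) ^ (N.card - 1 + M.card) = 1 :=
      Even.neg_one_pow (by rw [hMcard]; exact ⟨N.card - 1, rfl⟩)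
    rw [heven]
  calc (∏ i ∈ N \ {n₀}, l i)
        + ∑ T' ∈ S, (-1 : ℝ) ^ (N.card - 1 + T'.card) * ∏ i ∈ M, l i
      = (∏ i ∈ M, l i)
        + (∑ T' ∈ S, ((-1 : ℝ) ^ (N.card - 1 + T'.card))) * ∏ i ∈ M, l i := by
        rw [Finset.sum_mul]
    _ = 0 := by rw [hsum]; ring
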